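/- Theorem (twisting construction of Section 5: the group C_n ≀ Γ(𝒦) with its distinguished generating subgroups). Let k ≥ 1 and let R_0, …, R_{k−1} be subgroups of G; write G_I := ⟨R_i : i ∈ I⟩ for I ⊆ {0,…,k−1}, and assume the intersection property G_I ∩ G_J = G_{I∩J} for all I, J ⊆ {0,…,k−1}. Fix x₀ ∈ V, assume π(g)(x₀) = x₀ for every g ∈ G_{{1,…,k−1}}, and assume the orbit intersection property: (x₀ · G_I) ∩ (x₀ · G_J) = x₀ · G_{I∩J} for all I, J ⊆ {0,…,k−1}, where x₀ · G_I denotes the orbit of x₀ under π(G_I). In Γ := (V → ZMod n) ⋊ G define R̂_0 := C_{x₀} and R̂_i := R_{i−1} (embedded as {(0, h) : h ∈ R_{i−1}}) for 1 ≤ i ≤ k, and write Γ_I := ⟨R̂_i : i ∈ I⟩ for I ⊆ {0,…,k}. Then: (a) every element of R̂_0 commutes with every element of R̂_i for 2 ≤ i ≤ k; (b) Γ_I ∩ Γ_J = Γ_{I∩J} for all I, J ⊆ {0,…,k}; (c) if moreover G = ⟨R_0, …, R_{k−1}⟩ and π(G) acts transitively on V, then Γ = Γ_{{0,…,k}} =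 ⟨R̂_0, …, R̂_k⟩. -/

import Mathlib

/-- The coordinate-permuting action on a direct power of a group: `(φ·σ)_i = σ_{φ⁻¹ i}`. -/
def permPi (v : ℕ) (G : Type*) [Group G] : Equiv.Perm (Fin v) →* MulAut (Fin v → G) where
  toFun φ :=
    { toFun := fun σ i => σ (φ⁻¹ i)
      invFun := fun σ i => σ (φ i)
      left_inv := fun σ => by funext i; simp
      right_inv := fun σ => by funext i; simp
      map_mul' := fun σ τ => rfl }
  map_one' := by ext σ i; simp
  map_mul' := fun φ ψ => by ext σ i; simp [mul_inv_rev]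

section

variable {G : Type*} [Group G] (n v : ℕ) (π : G →* Equiv.Perm (Fin v))

/-- The semidirect product `Γ = (V → ZMod n) ⋊ G`, where `g ∈ G` acts on functions by
`(g·w)(i) = w(π(g)⁻¹ i)`.  (The additive group `ZMod n` is written multiplicatively.) -/
abbrev GammaSDP := (Fin v → Multiplicative (ZMod n))
  ⋊[(permPi v (Multiplicative (ZMod n))).comp π] G

/-- The canonical copy `C_x` of `ZMod n` at coordinate `x`:
the subgroup `{(w, 1) : w i = 0 for all i ≠ x}` of `Γ`. -/
def coordCopy (x : Fin v) : Subgroup (GammaSDP n v π) where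
  carrier := {p | p.right = 1 ∧ ∀ i, i ≠ x → Multiplicative.toAdd (p.left i) = 0}
  one_mem' := by
    refine ⟨rfl, fun i _ => ?_⟩
    simp [SemidirectProduct.one_left]
  mul_mem' := by
    rintro p q ⟨hp1, hp2⟩ ⟨hq1, hq2⟩
    refine ⟨by simp [SemidirectProduct.mul_right, hp1, hq1], fun i hi => ?_⟩
    have h : (p * q).left i = p.left i *
        (((permPi v (Multiplicative (ZMod n))).comp π) p.right q.left) i := rfl
    rw [h]
    have h2 : (((permPi v (Multiplicative (ZMod n))).comp π) p.right q.left) i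
        = q.left ((π p.right)⁻¹ i) := rfl
    rw [h2, hp1]
    simp only [map_one]
    have h3 : ((1 : Equiv.Perm (Fin v)))⁻¹ i = i := rfl
    rw [h3, toAdd_mul, hp2 i hi, hq2 i hi, add_zero]
  inv_mem' := by
    rintro p ⟨hp1, hp2⟩
    refine ⟨by simp [SemidirectProduct.inv_right, hp1], fun i hi => ?_⟩
    have h : (p⁻¹).left i = ((((permPi v (Multiplicative (ZMod n))).comp π) p.right⁻¹)
        p.left⁻¹) i := rfl
    rw [h]
    have h2 : ((((permPi v (Multiplicative (ZMod n))).comp π) p.right⁻¹) p.left⁻¹) i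
        = (p.left ((π p.right⁻¹)⁻¹ i))⁻¹ := rfl
    rw [h2, hp1]
    simp [hp2 i hi]

variable {k : ℕ} (R : Fin k → Subgroup G) (x₀ : Fin v)

/-- `G_I = ⟨R_i : i ∈ I⟩`. -/
def GI (I : Set (Fin k)) : Subgroup G := ⨆ i ∈ I, R i

/-- The orbit `x₀ · G_I` of the base point `x₀` under `π(G_I)`. -/
def orb (I : Set (Fin k)) : Set (Fin v) := {x | ∃ g ∈ GI R I, π g x₀ = x}

/-- The distinguished generating subgroups `R̂_0 = C_{x₀}` and `R̂_i = R_{i−1}`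
(for `1 ≤ i ≤ k`) of `Γ`. -/
def Rhat (i : Fin (k + 1)) : Subgroup (GammaSDP n v π) :=
  if h : (i : ℕ) = 0 then coordCopy n v π x₀
  else Subgroup.map (SemidirectProduct.inr) (R ⟨(i : ℕ) - 1, by omega⟩)

/-- `Γ_I = ⟨R̂_i : i ∈ I⟩`. -/
def GammaI (I : Set (Fin (k + 1))) : Subgroup (GammaSDP n v π) :=
  ⨆ i ∈ I, Rhat n v π R x₀ i

open SemidirectProduct in
lemma Rhat_zero : Rhat n v π R x₀ 0 = coordCopy n v π x₀ := dif_pos (Fin.val_zero _)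

open SemidirectProduct in
lemma Rhat_ne_zero {i : Fin (k + 1)} (h : (i : ℕ) ≠ 0) :
    Rhat n v π R x₀ i = Subgroup.map SemidirectProduct.inr (R ⟨(i : ℕ) - 1, by omega⟩) :=
  dif_neg h

/-- The shift of an index set. -/
def shiftSet (I : Set (Fin (k + 1))) : Set (Fin k) := Fin.succ ⁻¹' I

/-- The support set allowed for the function part of elements of `Γ_I`. -/
def suppSet (I : Set (Fin (k + 1))) : Set (Fin v) :=
  {x | (0 : Fin (k + 1)) ∈ I ∧ x ∈ orb v π R x₀ (shiftSet I)}

lemma mem_GI_of_mem (I : Set (Fin k)) {j : Fin k} (hj : j ∈ I) {g : G} (hg : g ∈ R j) :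
    g ∈ GI R I := (le_iSup₂ (f := fun i (_ : i ∈ I) => R i) j hj) hg

lemma orb_stable (I : Set (Fin k)) {g : G} (hg : g ∈ GI R I) {x : Fin v}
    (hx : x ∈ orb v π R x₀ I) : π g x ∈ orb v π R x₀ I := by
  obtain ⟨g', hg', rfl⟩ := hx
  exact ⟨g * g', mul_mem hg hg', by simp [map_mul]⟩

lemma suppSet_stable (I : Set (Fin (k + 1))) {g : G} (hg : g ∈ GI R (shiftSet I)) {x : Fin v}
    (hx : x ∈ suppSet v π R x₀ I) : π g x ∈ suppSet v π R x₀ I :=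
  ⟨hx.1, orb_stable v π R x₀ _ hg hx.2⟩

/-- The explicit description of `Γ_I` as a set. -/
def pieceSub (I : Set (Fin (k + 1))) : Subgroup (GammaSDP n v π) where
  carrier := {p | p.right ∈ GI R (shiftSet I) ∧ ∀ x ∉ suppSet v π R x₀ I, p.left x = 1}
  one_mem' := ⟨one_mem _, fun _ _ => rfl⟩
  mul_mem' := by
    rintro p q ⟨hp1, hp2⟩ ⟨hq1, hq2⟩
    refine ⟨mul_mem hp1 hq1, fun x hx => ?_⟩
    have hmul : (p * q).left x = p.left x * q.left ((π p.right)⁻¹ x) := rfl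
    rw [hmul, hp2 x hx, hq2 _ ?_, one_mul]
    intro hy
    have h2 := suppSet_stable v π R x₀ I hp1 hy
    rw [← Equiv.Perm.mul_apply, mul_inv_cancel, Equiv.Perm.one_apply] at h2
    exact hx h2
  inv_mem' := by
    rintro p ⟨hp1, hp2⟩
    refine ⟨inv_mem hp1, fun x hx => ?_⟩
    have hinv : (p⁻¹).left x = (p.left ((π p.right⁻¹)⁻¹ x))⁻¹ := rfl
    have hpt : (π p.right⁻¹)⁻¹ x = π p.right x := by simp
    rw [hinv, hpt, hp2 _ ?_, inv_one]
    intro hy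
    have h2 := suppSet_stable v π R x₀ I (inv_mem hp1) hy
    simp only [map_inv, ← Equiv.Perm.mul_apply, inv_mul_cancel, Equiv.Perm.one_apply] at h2
    exact hx h2

open SemidirectProduct in
lemma inr_mem_gammaI (I : Set (Fin (k + 1))) {g : G} (hg : g ∈ GI R (shiftSet I)) :
    (inr g : GammaSDP n v π) ∈ GammaI n v π R x₀ I := by
  have h1 : GI R (shiftSet I) ≤
      Subgroup.comap (inr : G →* GammaSDP n v π) (GammaI n v π R x₀ I) := by
    refine iSup₂_le fun j hj => ?_
    rw [← Subgroup.map_le_iff_le_comap]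
    have h2 : Subgroup.map (inr : G →* GammaSDP n v π) (R j)
        = Rhat n v π R x₀ (Fin.succ j) := by
      rw [Rhat_ne_zero n v π R x₀ (by simp)]
      rfl
    rw [h2]
    exact le_iSup₂ (f := fun i (_ : i ∈ I) => Rhat n v π R x₀ i) (Fin.succ j) hj
  exact h1 hg

lemma x0_mem_orb (I : Set (Fin k)) : x₀ ∈ orb v π R x₀ I :=
  ⟨1, one_mem _, by simp⟩

open SemidirectProduct in
lemma mulSingle_mem_gammaI (I : Set (Fin (k + 1))) (h0 : (0 : Fin (k + 1)) ∈ I)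
    (c : Multiplicative (ZMod n)) :
    (inl (Pi.mulSingle x₀ c) : GammaSDP n v π) ∈ GammaI n v π R x₀ I := by
  have h1 : (inl (Pi.mulSingle x₀ c) : GammaSDP n v π) ∈ coordCopy n v π x₀ := by
    refine ⟨rfl, fun i hi => ?_⟩
    have : (inl (Pi.mulSingle x₀ c) : GammaSDP n v π).left i = 1 := by
      rw [left_inl, Pi.mulSingle_apply, if_neg hi]
    rw [this]; rfl
  have h2 : coordCopy n v π x₀ ≤ GammaI n v π R x₀ I := by
    rw [← Rhat_zero n v π R x₀]
    exact le_iSup₂ (f := fun i (_ : i ∈ I) => Rhat n v π R x₀ i) 0 h0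
  exact h2 h1

open SemidirectProduct in
lemma gammaI_eq_piece (I : Set (Fin (k + 1))) :
    GammaI n v π R x₀ I = pieceSub n v π R x₀ I := by
  apply le_antisymm
  · refine iSup₂_le fun i hi => ?_
    by_cases h0 : (i : ℕ) = 0
    · have hi0 : i = 0 := Fin.ext h0
      subst hi0
      rw [Rhat_zero n v π R x₀]
      rintro p ⟨hp1, hp2⟩
      refine ⟨hp1 ▸ one_mem _, fun x hx => ?_⟩
      have hxne : x ≠ x₀ := by
        rintro rfl
        exact hx ⟨hi, x0_mem_orb v π R _ _⟩
      have := hp2 x hxne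
      rwa [toAdd_eq_zero] at this
    · rw [Rhat_ne_zero n v π R x₀ h0]
      rintro p ⟨h, hh, rfl⟩
      have hj : (⟨(i : ℕ) - 1, by omega⟩ : Fin k) ∈ shiftSet I := by
        show Fin.succ _ ∈ I
        have : Fin.succ (⟨(i : ℕ) - 1, by omega⟩ : Fin k) = i :=
          Fin.ext (by simp only [Fin.val_succ]; omega)
        rwa [this]
      exact ⟨mem_GI_of_mem R _ hj hh, fun x _ => rfl⟩
  · rintro p ⟨hp1, hp2⟩
    rw [← SemidirectProduct.inl_left_mul_inr_right p]
    refine mul_mem ?_ (inr_mem_gammaI n v π R x₀ I hp1)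
    have hK : p.left ∈ Subgroup.comap
        (inl : (Fin v → Multiplicative (ZMod n)) →* GammaSDP n v π) (GammaI n v π R x₀ I) := by
      rw [← Finset.univ_prod_mulSingle p.left]
      refine Subgroup.prod_mem _ fun x _ => ?_
      rw [Subgroup.mem_comap]
      by_cases hx : p.left x = 1
      · rw [hx, Pi.mulSingle_one, map_one]; exact one_mem _
      · have hxS : x ∈ suppSet v π R x₀ I := by
          by_contra h; exact hx (hp2 x h)
        obtain ⟨h0, g', hg', hgx⟩ := hxS
        have key : (Pi.mulSingle x (p.left x) : Fin v → Multiplicative (ZMod n))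
            = ((permPi v (Multiplicative (ZMod n))).comp π) g' (Pi.mulSingle x₀ (p.left x)) := by
          funext i
          have hap : ∀ w : Fin v → Multiplicative (ZMod n),
              (((permPi v (Multiplicative (ZMod n))).comp π) g') w i = w ((π g')⁻¹ i) :=
            fun _ => rfl
          rw [hap, Pi.mulSingle_apply, Pi.mulSingle_apply]
          have hiff : (π g')⁻¹ i = x₀ ↔ i = x := by
            rw [← hgx]
            exact Equiv.symm_apply_eq _
          by_cases hix : i = x
          · rw [if_pos hix, if_pos (hiff.mpr hix)]
          · rw [if_neg hix, if_neg fun hc => hix (hiff.mp hc)]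
        rw [key, SemidirectProduct.inl_aut]
        exact mul_mem (mul_mem (inr_mem_gammaI n v π R x₀ I hg')
          (mulSingle_mem_gammaI n v π R x₀ I h0 _))
          (inr_mem_gammaI n v π R x₀ I (inv_mem hg'))
    exact Subgroup.mem_comap.mp hK

/-- Twisting construction of Section 5: in `Γ = (V → ZMod n) ⋊ G = C_n ≀ Γ(𝒦)`, with
`R̂_0 = C_{x₀}` and `R̂_i = R_{i−1}` for `1 ≤ i ≤ k`: (a) every element of `R̂_0` commutes with
every element of `R̂_i` for `2 ≤ i ≤ k`; (b) the intersection property `Γ_I ∩ Γ_J = Γ_{I∩J}`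
holds; and (c) if `G = ⟨R_0, …, R_{k−1}⟩` and `π(G)` acts transitively on `V`, then
`Γ = ⟨R̂_0, …, R̂_k⟩`. -/
theorem twisting_subgroups_of_powerComplex (hn : 2 ≤ n) (hv : 1 ≤ v) (hk : 1 ≤ k)
    (hint : ∀ I J : Set (Fin k), GI R I ⊓ GI R J = GI R (I ∩ J))
    (hfix : ∀ g ∈ GI R {i : Fin k | (i : ℕ) ≠ 0}, π g x₀ = x₀)
    (horb : ∀ I J : Set (Fin k), orb v π R x₀ I ∩ orb v π R x₀ J = orb v π R x₀ (I ∩ J)) :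
    (∀ i : Fin (k + 1), 2 ≤ (i : ℕ) →
      ∀ p ∈ Rhat n v π R x₀ 0, ∀ q ∈ Rhat n v π R x₀ i, Commute p q) ∧
    (∀ I J : Set (Fin (k + 1)),
      GammaI n v π R x₀ I ⊓ GammaI n v π R x₀ J = GammaI n v π R x₀ (I ∩ J)) ∧
    ((⨆ i : Fin k, R i) = ⊤ → (∀ x y : Fin v, ∃ g : G, π g x = y) →
      GammaI n v π R x₀ Set.univ = ⊤) := by
  have hshift : ∀ I J : Set (Fin (k + 1)),
      shiftSet (I ∩ J) = shiftSet (k := k) I ∩ shiftSet J := fun _ _ => rfl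
  have hS : ∀ I J : Set (Fin (k + 1)),
      suppSet v π R x₀ (I ∩ J) = suppSet v π R x₀ I ∩ suppSet v π R x₀ J := by
    intro I J
    ext x
    constructor
    · rintro ⟨⟨h0I, h0J⟩, hx⟩
      rw [hshift, ← horb] at hx
      exact ⟨⟨h0I, hx.1⟩, ⟨h0J, hx.2⟩⟩
    · rintro ⟨⟨h0I, hxI⟩, ⟨h0J, hxJ⟩⟩
      refine ⟨⟨h0I, h0J⟩, ?_⟩
      rw [hshift, ← horb]
      exact ⟨hxI, hxJ⟩
  refine ⟨?_, ?_, ?_⟩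
  · -- (a) commutation
    intro i hi2 p hp q hq
    rw [Rhat_zero n v π R x₀] at hp
    rw [Rhat_ne_zero n v π R x₀ (by omega)] at hq
    obtain ⟨hp1, hp2⟩ := hp
    obtain ⟨h, hh, rfl⟩ := hq
    have hmem : (⟨(i : ℕ) - 1, by omega⟩ : Fin k) ∈ {i : Fin k | (i : ℕ) ≠ 0} := by
      simp only [Set.mem_setOf_eq]
      omega
    have hhG : h ∈ GI R {i : Fin k | (i : ℕ) ≠ 0} := mem_GI_of_mem R _ hmem hh
    have hfx : π h x₀ = x₀ := hfix h hhG
    have hleft : ∀ j : Fin v, j ≠ x₀ → p.left j = 1 := fun j hj => by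
      have := hp2 j hj; rwa [toAdd_eq_zero] at this
    show p * SemidirectProduct.inr h = SemidirectProduct.inr h * p
    have hR : (p * SemidirectProduct.inr h).right
        = (SemidirectProduct.inr h * p).right := by
      simp [SemidirectProduct.mul_right, hp1]
    have hL : (p * SemidirectProduct.inr h).left
        = (SemidirectProduct.inr h * p).left := by
      rw [SemidirectProduct.mul_left, SemidirectProduct.mul_left,
        SemidirectProduct.left_inr, SemidirectProduct.right_inr, map_one, mul_one, one_mul]
      funext j
      show p.left j = p.left ((π h)⁻¹ j)
      by_cases hj : j = x₀
      · rw [hj, show (π h)⁻¹ x₀ = x₀ by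
          conv_lhs => rw [← hfx, ← Equiv.Perm.mul_apply, inv_mul_cancel, Equiv.Perm.one_apply]]
      · rw [hleft j hj, hleft _ fun hc => hj (by rw [← hfx, ← hc, ← Equiv.Perm.mul_apply, mul_inv_cancel, Equiv.Perm.one_apply])]
    exact SemidirectProduct.ext hL hR
  · -- (b) intersection property
    intro I J
    ext p
    rw [Subgroup.mem_inf, gammaI_eq_piece, gammaI_eq_piece, gammaI_eq_piece]
    constructor
    · rintro ⟨⟨h1, h2⟩, ⟨h3, h4⟩⟩
      refine ⟨?_, fun x hx => ?_⟩
      · rw [hshift, ← hint]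
        exact ⟨h1, h3⟩
      · rw [hS] at hx
        by_cases hxi : x ∈ suppSet v π R x₀ I
        · exact h4 x fun hc => hx ⟨hxi, hc⟩
        · exact h2 x hxi
    · rintro ⟨h1, h2⟩
      rw [hshift, ← hint] at h1
      refine ⟨⟨h1.1, fun x hx => h2 x ?_⟩, ⟨h1.2, fun x hx => h2 x ?_⟩⟩
      · rw [hS]; rintro ⟨hxI, _⟩; exact hx hxI
      · rw [hS]; rintro ⟨_, hxJ⟩; exact hx hxJ
  · -- (c) generation
    intro hgen htrans
    rw [gammaI_eq_piece, eq_top_iff]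
    intro p _
    have hGIt : GI R (shiftSet (Set.univ : Set (Fin (k + 1)))) = ⊤ := by
      have h1 : shiftSet (Set.univ : Set (Fin (k + 1))) = (Set.univ : Set (Fin k)) := rfl
      rw [h1, GI]
      simpa [iSup_univ] using hgen
    refine ⟨by rw [hGIt]; trivial, fun x hx => absurd ?_ hx⟩
    obtain ⟨g, hg⟩ := htrans x₀ x
    exact ⟨trivial, g, by rw [hGIt]; trivial, hg⟩

end
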